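/- Let T be a finite weighted tree with edge weights d_e > 0, rooted at some vertex. For each edge e with endpoints w (closer to root) and z, set f_e = 1_w - 1_z ∈ TP(T). Then every f ∈ TP(T) has a unique representation f = ∑_{e∈E(T)} a_e f_e, and the double-point seminorm satisfies ‖f‖_DP = max over paths P in T (with vertex endpoints u,v, decomposed as ascending part P₁ toward the root followed by descending part P₂) of |∑_{e∈P₁} d_e a_e − ∑_{e∈P₂} d_e a_e|. -/

import Mathlib

open Classical

/-- The set of (indices of) edges on the path from `v` to the root `0` in the rooted tree
on `Fin (n+1)` given by the parent function `p`: each non-root vertex `z` indexes the edge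
`{p z, z}`, and `z` is on the chain of `v` iff `z` is an ancestor of `v` (or `v` itself). -/
noncomputable def chainToRoot {n : ℕ} (p : Fin (n + 1) → Fin (n + 1))
    (v : Fin (n + 1)) : Finset (Fin (n + 1)) :=
  Finset.univ.filter fun z => z ≠ 0 ∧ ∃ k, p^[k] v = z

/-- The weighted tree (geodesic) distance: the weight of the symmetric difference of the
two root-chains, i.e. the sum of the weights of the edges on the unique path from `u`
to `v`. -/
noncomputable def treeDist {n : ℕ} (p : Fin (n + 1) → Fin (n + 1))
    (wt : Fin (n + 1) → ℝ) (u v : Fin (n + 1)) : ℝ :=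
  ∑ z ∈ (chainToRoot p u \ chainToRoot p v) ∪ (chainToRoot p v \ chainToRoot p u), wt z


open Classical Finset

namespace Stmt13Aux

variable {n : ℕ} {p : Fin (n + 1) → Fin (n + 1)}

/-- subtree of z -/
noncomputable def subT (p : Fin (n + 1) → Fin (n + 1)) (z : Fin (n + 1)) :
    Finset (Fin (n + 1)) :=
  Finset.univ.filter fun m => ∃ k, p^[k] m = z

lemma mem_subT {z m : Fin (n + 1)} : m ∈ subT p z ↔ ∃ k, p^[k] m = z := by
  simp [subT]

lemma mem_chain {z v : Fin (n + 1)} :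
    z ∈ chainToRoot p v ↔ z ≠ 0 ∧ ∃ k, p^[k] v = z := by
  simp [chainToRoot]

lemma iterLe (hp0 : p 0 = 0) (hp : ∀ v, v ≠ 0 → p v < v) :
    ∀ (k : ℕ) (m : Fin (n + 1)), p^[k] m ≤ m := by
  intro k
  induction k with
  | zero => intro m; simp
  | succ k ih =>
    intro m
    rw [Function.iterate_succ_apply]
    refine (ih (p m)).trans ?_
    by_cases hm : m = 0
    · subst hm; rw [hp0]
    · exact (hp m hm).le

lemma reach0 (hp0 : p 0 = 0) (hp : ∀ v, v ≠ 0 → p v < v) :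
    ∀ m : Fin (n + 1), ∃ k, p^[k] m = 0 := by
  have : ∀ (j : ℕ) (m : Fin (n + 1)), m.val ≤ j → ∃ k, p^[k] m = 0 := by
    intro j
    induction j with
    | zero =>
      intro m hm
      have : m = 0 := by apply Fin.ext; simp only [Fin.val_zero]; omega
      exact ⟨0, by simp [this]⟩
    | succ j ih =>
      intro m hm
      by_cases h : m = 0
      · exact ⟨0, by simp [h]⟩
      · obtain ⟨k, hk⟩ := ih (p m) (by have := Fin.lt_def.mp (hp m h); omega)
        exact ⟨k + 1, by rw [Function.iterate_succ_apply, hk]⟩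
  exact fun m => this n m (Nat.lt_succ_iff.mp m.isLt)

end Stmt13Aux
namespace Stmt13Aux
variable {n : ℕ} {p : Fin (n + 1) → Fin (n + 1)}

lemma child_not_anc (hp0 : p 0 = 0) (hp : ∀ v, v ≠ 0 → p v < v)
    {v z1 z2 : Fin (n + 1)} (hz1 : p z1 = v) (hz2 : p z2 = v) (h2 : z2 ≠ 0)
    (hl : ∃ l, p^[l] z1 = z2) : z1 = z2 := by
  obtain ⟨l, hl⟩ := hl
  cases l with
  | zero => exact hl
  | succ l =>
    exfalso
    rw [Function.iterate_succ_apply, hz1] at hl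
    have h1 : z2 ≤ v := hl ▸ iterLe hp0 hp l v
    have h3 : v < z2 := hz2 ▸ hp z2 h2
    exact absurd h1 (not_le.mpr h3)

lemma anc_total {m z1 z2 : Fin (n + 1)} (h1 : ∃ i, p^[i] m = z1)
    (h2 : ∃ j, p^[j] m = z2) : (∃ l, p^[l] z1 = z2) ∨ (∃ l, p^[l] z2 = z1) := by
  obtain ⟨i, hi⟩ := h1
  obtain ⟨j, hj⟩ := h2
  rcases le_total i j with h | h
  · left; exact ⟨j - i, by rw [← hi, ← Function.iterate_add_apply, Nat.sub_add_cancel h, hj]⟩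
  · right; exact ⟨i - j, by rw [← hj, ← Function.iterate_add_apply, Nat.sub_add_cancel h, hi]⟩

lemma biUnion_children (hp0 : p 0 = 0) (hp : ∀ v, v ≠ 0 → p v < v) (v : Fin (n + 1)) :
    (Finset.univ.filter fun z => p z = v ∧ z ≠ 0).biUnion (subT p) =
      (subT p v).erase v := by
  ext m
  simp only [Finset.mem_biUnion, Finset.mem_filter, Finset.mem_univ, true_and,
    Finset.mem_erase, mem_subT]
  constructor
  · rintro ⟨z, ⟨hpz, hz0⟩, k, hk⟩
    refine ⟨?_, k + 1, by rw [Function.iterate_succ_apply', hk, hpz]⟩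
    rintro rfl
    have h1 : z ≤ m := hk ▸ iterLe hp0 hp k m
    have h2 : m < z := hpz ▸ hp z hz0
    exact absurd h1 (not_le.mpr h2)
  · rintro ⟨hmv, hex⟩
    have hk := Nat.find_spec hex
    have hk0 : Nat.find hex ≠ 0 := by
      intro h; rw [h] at hk; exact hmv hk
    refine ⟨p^[Nat.find hex - 1] m, ⟨?_, ?_⟩, Nat.find hex - 1, rfl⟩
    · have h1 : (Nat.find hex - 1) + 1 = Nat.find hex := by omega
      calc p (p^[Nat.find hex - 1] m) = p^[(Nat.find hex - 1) + 1] m :=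
            (Function.iterate_succ_apply' p _ m).symm
        _ = v := by rw [h1, hk]
    · intro h0
      have hiter : p^[Nat.find hex] m = 0 := by
        have hsplit : Nat.find hex = 1 + (Nat.find hex - 1) := by omega
        rw [hsplit, Function.iterate_add_apply, h0]
        simp [hp0]
      have hv0 : v = 0 := by rw [← hk, hiter]
      have hfind : p^[Nat.find hex - 1] m = v := by rw [h0, hv0]
      have hle : Nat.find hex ≤ Nat.find hex - 1 := Nat.find_le hfind
      omega

lemma children_disjoint (hp0 : p 0 = 0) (hp : ∀ v, v ≠ 0 → p v < v) (v : Fin (n + 1)) :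
    Set.PairwiseDisjoint ↑(Finset.univ.filter fun z => p z = v ∧ z ≠ 0) (subT p) := by
  intro z1 h1 z2 h2 hne
  simp only [Finset.coe_filter, Set.mem_setOf_eq, Finset.mem_univ, true_and] at h1 h2
  rw [Function.onFun, Finset.disjoint_left]
  intro m hm1 hm2
  rw [mem_subT] at hm1 hm2
  rcases anc_total hm1 hm2 with h | h
  · exact hne (child_not_anc hp0 hp h1.1 h2.1 h2.2 h)
  · exact hne (child_not_anc hp0 hp h2.1 h1.1 h1.2 h).symm

lemma children_sum (hp0 : p 0 = 0) (hp : ∀ v, v ≠ 0 → p v < v)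
    (f : Fin (n + 1) → ℝ) (v : Fin (n + 1)) :
    ∑ z ∈ Finset.univ.filter (fun z => p z = v ∧ z ≠ 0), ∑ m ∈ subT p z, f m =
      ∑ m ∈ subT p v, f m - f v := by
  rw [← Finset.sum_biUnion (children_disjoint hp0 hp v), biUnion_children hp0 hp v,
    Finset.sum_erase_eq_sub (show v ∈ subT p v from mem_subT.mpr ⟨0, by simp⟩)]

end Stmt13Aux
namespace Stmt13Aux
variable {n : ℕ} {p : Fin (n + 1) → Fin (n + 1)}

noncomputable def Acoef (p : Fin (n + 1) → Fin (n + 1)) (f : Fin (n + 1) → ℝ) :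
    Fin (n + 1) → ℝ := fun z => -∑ m ∈ subT p z, f m

noncomputable def chi (s : Finset (Fin (n + 1))) (z : Fin (n + 1)) : ℝ :=
  if z ∈ s then 1 else 0

lemma A_zero (hp0 : p 0 = 0) (hp : ∀ v, v ≠ 0 → p v < v) {f : Fin (n + 1) → ℝ}
    (hf : (∑ v, f v) = 0) : Acoef p f 0 = 0 := by
  have h : subT p (0 : Fin (n + 1)) = Finset.univ := by
    ext m; simp only [mem_subT, Finset.mem_univ, iff_true]
    exact reach0 hp0 hp m
  simp [Acoef, h, hf]

lemma evalSum (c : Fin (n + 1) → ℝ) (v : Fin (n + 1)) :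
    ((∑ z, c z • ((fun w => if w = p z then (1 : ℝ) else 0) -
      fun w => if w = z then 1 else 0) : Fin (n + 1) → ℝ)) v =
    ∑ z ∈ Finset.univ.filter (fun z => v = p z), c z - c v := by
  rw [Finset.sum_apply]
  simp only [Pi.smul_apply, Pi.sub_apply, smul_eq_mul]
  have h1 : ∀ z : Fin (n + 1), c z * ((if v = p z then (1 : ℝ) else 0) -
      if v = z then 1 else 0) =
      (if v = p z then c z else 0) - (if v = z then c z else 0) := by
    intro z; split_ifs <;> ring
  rw [Finset.sum_congr rfl (fun z _ => h1 z), Finset.sum_sub_distrib, ← Finset.sum_filter]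
  congr 1
  rw [Finset.sum_ite_eq]
  simp

lemma rep_exists (hp0 : p 0 = 0) (hp : ∀ v, v ≠ 0 → p v < v) {f : Fin (n + 1) → ℝ}
    (hf : (∑ v, f v) = 0) :
    f = ∑ z, Acoef p f z • ((fun w => if w = p z then (1 : ℝ) else 0) -
      fun w => if w = z then 1 else 0) := by
  funext v
  rw [evalSum]
  have hsub : ∑ z ∈ Finset.univ.filter (fun z => v = p z), Acoef p f z =
      ∑ z ∈ Finset.univ.filter (fun z => p z = v ∧ z ≠ 0), Acoef p f z := by
    refine (Finset.sum_subset ?_ ?_).symm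
    · intro z hz
      simp only [Finset.mem_filter, Finset.mem_univ, true_and] at hz ⊢
      exact hz.1.symm
    · intro z hz hnz
      simp only [Finset.mem_filter, Finset.mem_univ, true_and, not_and, not_ne_iff] at hz hnz
      rw [hnz hz.symm]
      exact A_zero hp0 hp hf
  rw [hsub]
  have : ∑ z ∈ Finset.univ.filter (fun z => p z = v ∧ z ≠ 0), Acoef p f z =
      -(∑ m ∈ subT p v, f m - f v) := by
    rw [← children_sum hp0 hp f v, ← Finset.sum_neg_distrib]
    rfl
  rw [this]
  simp only [Acoef]
  ring

lemma rep_unique (hp0 : p 0 = 0) (hp : ∀ v, v ≠ 0 → p v < v) {f : Fin (n + 1) → ℝ}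
    (hf : (∑ v, f v) = 0) (a : Fin (n + 1) → ℝ) (ha0 : a 0 = 0)
    (ha : f = ∑ z, a z • ((fun w => if w = p z then (1 : ℝ) else 0) -
      fun w => if w = z then 1 else 0)) : a = Acoef p f := by
  have hval : ∀ v, ∑ z ∈ Finset.univ.filter (fun z => v = p z), a z - a v =
      ∑ z ∈ Finset.univ.filter (fun z => v = p z), Acoef p f z - Acoef p f v := by
    intro v
    rw [← evalSum, ← evalSum, ← ha, ← rep_exists hp0 hp hf]
  have key : ∀ k : ℕ, ∀ v : Fin (n + 1), n - v.val = k → a v = Acoef p f v := by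
    intro k
    induction k using Nat.strong_induction_on with
    | _ k ih =>
      intro v hv
      by_cases h0 : v = 0
      · rw [h0, ha0, A_zero hp0 hp hf]
      · have hs : ∀ z ∈ Finset.univ.filter (fun z => v = p z), a z = Acoef p f z := by
          intro z hz
          simp only [Finset.mem_filter, Finset.mem_univ, true_and] at hz
          have hz0 : z ≠ 0 := by
            intro h; rw [h, hp0] at hz; exact h0 hz
          have hlt : v < z := by rw [hz]; exact hp z hz0
          have hv' : (v : ℕ) < (z : ℕ) := Fin.lt_def.mp hlt
          have hzlt : (z : ℕ) < n + 1 := z.isLt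
          exact ih (n - z.val) (by omega) z rfl
        have heq := hval v
        rw [Finset.sum_congr rfl hs] at heq
        linarith
  funext v
  exact key (n - v.val) v rfl

variable {wt : Fin (n + 1) → ℝ}

lemma dist_eq (wt : Fin (n + 1) → ℝ) (w m : Fin (n + 1)) :
    treeDist p wt w m = ∑ z, (chi (chainToRoot p w) z + chi (chainToRoot p m) z -
      2 * chi (chainToRoot p w) z * chi (chainToRoot p m) z) * wt z := by
  rw [treeDist]
  rw [show (chainToRoot p w \ chainToRoot p m) ∪ (chainToRoot p m \ chainToRoot p w) =
    Finset.univ ∩ ((chainToRoot p w \ chainToRoot p m) ∪ (chainToRoot p m \ chainToRoot p w))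
    from (Finset.univ_inter _).symm, ← Finset.sum_ite_mem]
  refine Finset.sum_congr rfl fun z _ => ?_
  simp only [chi, Finset.mem_union, Finset.mem_sdiff]
  by_cases h1 : z ∈ chainToRoot p w <;> by_cases h2 : z ∈ chainToRoot p m <;>
    simp only [h1, h2, if_true, if_false, not_true, not_false_iff, and_true, and_false,
      true_and, false_and, or_false, false_or, or_self, if_neg, if_pos] <;> ring_nf

lemma mainId (hp0 : p 0 = 0) (hp : ∀ v, v ≠ 0 → p v < v) {f : Fin (n + 1) → ℝ}
    (hf : (∑ v, f v) = 0) (u v : Fin (n + 1)) :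
    ∑ m, ((treeDist p wt v m - treeDist p wt u m) / 2) * f m =
    ∑ z ∈ chainToRoot p v, wt z * Acoef p f z -
      ∑ z ∈ chainToRoot p u, wt z * Acoef p f z := by
  have step1 : ∀ m, ((treeDist p wt v m - treeDist p wt u m) / 2) * f m =
      ∑ z, (chi (chainToRoot p v) z - chi (chainToRoot p u) z) *
        ((1/2 - chi (chainToRoot p m) z) * f m) * wt z := by
    intro m
    rw [dist_eq wt v m, dist_eq wt u m, ← Finset.sum_sub_distrib, Finset.sum_div,
      Finset.sum_mul]
    exact Finset.sum_congr rfl fun z _ => by ring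
  rw [Finset.sum_congr rfl (fun m _ => step1 m), Finset.sum_comm]
  have step2 : ∀ z, ∑ m, (chi (chainToRoot p v) z - chi (chainToRoot p u) z) *
      ((1/2 - chi (chainToRoot p m) z) * f m) * wt z =
      (chi (chainToRoot p v) z - chi (chainToRoot p u) z) * wt z * Acoef p f z := by
    intro z
    by_cases hz : z = 0
    · subst hz
      have h1 : chi (chainToRoot p v) 0 = 0 := by simp [chi, mem_chain]
      have h2 : chi (chainToRoot p u) 0 = 0 := by simp [chi, mem_chain]
      simp [h1, h2]
    · have hinner : ∑ m, (1/2 - chi (chainToRoot p m) z) * f m = Acoef p f z := by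
        have h3 : ∀ m, (1/2 - chi (chainToRoot p m) z) * f m =
            (1/2) * f m - (if m ∈ subT p z then f m else 0) := by
          intro m
          have h4 : chi (chainToRoot p m) z = if m ∈ subT p z then 1 else 0 := by
            simp only [chi, mem_chain, mem_subT]
            by_cases h : ∃ k, p^[k] m = z
            · simp [h, hz]
            · simp [h]
          rw [h4]; split_ifs <;> ring
        rw [Finset.sum_congr rfl (fun m _ => h3 m), Finset.sum_sub_distrib,
          ← Finset.mul_sum, hf, Finset.sum_ite_mem, Finset.univ_inter]
        simp [Acoef]
      calc ∑ m, (chi (chainToRoot p v) z - chi (chainToRoot p u) z) *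
            ((1/2 - chi (chainToRoot p m) z) * f m) * wt z =
          (chi (chainToRoot p v) z - chi (chainToRoot p u) z) * wt z *
            ∑ m, (1/2 - chi (chainToRoot p m) z) * f m := by
            rw [Finset.mul_sum]
            exact Finset.sum_congr rfl fun m _ => by ring
        _ = _ := by rw [hinner]
  rw [Finset.sum_congr rfl (fun z _ => step2 z)]
  have h5 : ∀ z, (chi (chainToRoot p v) z - chi (chainToRoot p u) z) * wt z * Acoef p f z =
      (if z ∈ chainToRoot p v then wt z * Acoef p f z else 0) -
      (if z ∈ chainToRoot p u then wt z * Acoef p f z else 0) := by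
    intro z; simp only [chi]; split_ifs <;> ring
  rw [Finset.sum_congr rfl (fun z _ => h5 z), Finset.sum_sub_distrib,
    Finset.sum_ite_mem, Finset.sum_ite_mem, Finset.univ_inter, Finset.univ_inter]

end Stmt13Aux
/-- Let `T` be a finite weighted rooted tree (root `0`, parent map `p`,
positive edge weights `wt z` on edges `{p z, z}`, `z ≠ 0`), with geodesic metric
`treeDist`. Every zero-sum `f` has a unique representation `f = ∑_e a_e f_e` in the basis
`f_e = 𝟙_{p z} - 𝟙_z`, and the double-point seminorm of `f` equals the maximum over paths
`P` (from `u`, ascending along `P₁ = chain u \ chain v`, then descending along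
`P₂ = chain v \ chain u` to `v`) of `|∑_{e ∈ P₁} d_e a_e - ∑_{e ∈ P₂} d_e a_e|`. -/
theorem stmt13 (n : ℕ) (p : Fin (n + 1) → Fin (n + 1)) (hp0 : p 0 = 0)
    (hp : ∀ v, v ≠ 0 → p v < v) (wt : Fin (n + 1) → ℝ) (hwt : ∀ v, v ≠ 0 → 0 < wt v)
    (f : Fin (n + 1) → ℝ) (hf : (∑ v, f v) = 0) :
    (∃! a : Fin (n + 1) → ℝ, a 0 = 0 ∧
      f = ∑ z, a z • ((fun v => if v = p z then (1 : ℝ) else 0) -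
        fun v => if v = z then 1 else 0)) ∧
    (∀ a : Fin (n + 1) → ℝ, a 0 = 0 →
      f = ∑ z, a z • ((fun v => if v = p z then (1 : ℝ) else 0) -
        fun v => if v = z then 1 else 0) →
      sSup {r : ℝ | ∃ u v : Fin (n + 1),
          r = |∑ m, ((treeDist p wt v m - treeDist p wt u m) / 2) * f m|} =
      sSup {r : ℝ | ∃ u v : Fin (n + 1),
          r = |∑ z ∈ chainToRoot p u \ chainToRoot p v, wt z * a z -
               ∑ z ∈ chainToRoot p v \ chainToRoot p u, wt z * a z|}) := by
  have hrep := Stmt13Aux.rep_exists hp0 hp hf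
  have hA0 := Stmt13Aux.A_zero hp0 hp hf
  refine ⟨⟨Stmt13Aux.Acoef p f, ⟨hA0, hrep⟩, ?_⟩, ?_⟩
  · rintro a ⟨ha0, ha⟩
    exact Stmt13Aux.rep_unique hp0 hp hf a ha0 ha
  · intro a ha0 ha
    have haA : a = Stmt13Aux.Acoef p f := Stmt13Aux.rep_unique hp0 hp hf a ha0 ha
    subst haA
    have keyabs : ∀ u v : Fin (n + 1),
        |∑ m, ((treeDist p wt v m - treeDist p wt u m) / 2) * f m| =
        |∑ z ∈ chainToRoot p u \ chainToRoot p v, wt z * Stmt13Aux.Acoef p f z -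
          ∑ z ∈ chainToRoot p v \ chainToRoot p u, wt z * Stmt13Aux.Acoef p f z| := by
      intro u v
      rw [Stmt13Aux.mainId hp0 hp hf u v, ← Finset.sum_sdiff_sub_sum_sdiff, abs_sub_comm]
    congr 1
    ext r
    simp only [Set.mem_setOf_eq]
    constructor
    · rintro ⟨u, v, rfl⟩
      exact ⟨u, v, keyabs u v⟩
    · rintro ⟨u, v, rfl⟩
      exact ⟨u, v, (keyabs u v).symm⟩
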